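/- Let φ be γ-strongly convex and g be λ-strongly convex, and let (x⋆, y⋆) be a saddle point of L(x,y) = g(x) + ⟨x, A y⟩ − φ(y). Suppose ỹ minimizes y ↦ φ(y) − ⟨x̄, A y⟩ + (1/(2σ))‖y − y^t‖₂² for some x̄, y^t and σ > 0. Then (1/(2σ))‖y^t − y⋆‖₂² ≥ (1/(2σ) + γ)‖ỹ − y⋆‖₂² + (1/(2σ))‖ỹ − y^t‖₂² + ⟨x⋆ − x̄, A(ỹ − y⋆)⟩. -/

import Mathlib

open Matrix RealInnerProductSpace

private lemma adjoint_inner {d q : ℕ} (A : Matrix (Fin d) (Fin q) ℝ)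
    (x : EuclideanSpace ℝ (Fin d)) (y : EuclideanSpace ℝ (Fin q)) :
    ⟪x, (WithLp.toLp 2 (A.mulVec y) : EuclideanSpace ℝ (Fin d))⟫ =
      ⟪(WithLp.toLp 2 (Aᵀ.mulVec x) : EuclideanSpace ℝ (Fin q)), y⟫ := by
  simp only [PiLp.inner_apply, RCLike.inner_apply, conj_trivial, Matrix.mulVec, PiLp.toLp_apply,
    dotProduct, Matrix.transpose_apply, Finset.mul_sum, Finset.sum_mul]
  rw [Finset.sum_comm]
  exact Finset.sum_congr rfl fun j _ => Finset.sum_congr rfl fun i _ => by ring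

private lemma crit {n : ℕ} {f : EuclideanSpace ℝ (Fin n) → ℝ} (hf : Differentiable ℝ f)
    (v yt0 m : EuclideanSpace ℝ (Fin n)) (c : ℝ)
    (hm : ∀ y, f m - ⟪v, m⟫ + c * ‖m - yt0‖ ^ 2 ≤ f y - ⟪v, y⟫ + c * ‖y - yt0‖ ^ 2)
    (w : EuclideanSpace ℝ (Fin n)) :
    ⟪gradient f m, w⟫ = ⟪v, w⟫ - 2 * c * ⟪m - yt0, w⟫ := by
  simp only [← real_inner_self_eq_norm_sq] at hm
  have hid : HasFDerivAt (fun y : EuclideanSpace ℝ (Fin n) => y - yt0)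
      (ContinuousLinearMap.id ℝ (EuclideanSpace ℝ (Fin n))) m :=
    (hasFDerivAt_id m).sub_const yt0
  have hq := (hid.inner ℝ hid).const_mul c
  have hlin : HasFDerivAt (fun y : EuclideanSpace ℝ (Fin n) => ⟪v, y⟫)
      (innerSL ℝ v) m := (innerSL ℝ v).hasFDerivAt
  have hψ := ((hf m).hasFDerivAt.sub hlin).add hq
  have hloc : IsLocalMin
      (fun y : EuclideanSpace ℝ (Fin n) => f y - ⟪v, y⟫ + c * ⟪y - yt0, y - yt0⟫) m :=
    Filter.Eventually.of_forall hm
  have h0 := hloc.hasFDerivAt_eq_zero hψ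
  have hw := congrFun (congrArg
    (fun (L : EuclideanSpace ℝ (Fin n) →L[ℝ] ℝ) => (L : EuclideanSpace ℝ (Fin n) → ℝ)) h0) w
  simp only [ContinuousLinearMap.add_apply, ContinuousLinearMap.sub_apply,
    ContinuousLinearMap.smul_apply, ContinuousLinearMap.coe_comp', Function.comp_apply,
    ContinuousLinearMap.prod_apply, ContinuousLinearMap.id_apply, fderivInnerCLM_apply,
    innerSL_apply_apply, ContinuousLinearMap.zero_apply, ContinuousLinearMap.coe_zero,
    Pi.zero_apply, smul_eq_mul] at hw
  have hgrad : ⟪gradient f m, w⟫ = fderiv ℝ f m w := InnerProductSpace.toDual_symm_apply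
  have hcomm : ⟪m - yt0, w⟫ = ⟪w, m - yt0⟫ := real_inner_comm _ _
  rw [hgrad]
  rw [← hcomm] at hw
  linear_combination hw

theorem dual_update_inequality
    (d q : ℕ) (γ lam : ℝ) (hγ : 0 < γ) (hlam : 0 < lam)
    (φ : EuclideanSpace ℝ (Fin q) → ℝ) (g : EuclideanSpace ℝ (Fin d) → ℝ)
    (hφdiff : Differentiable ℝ φ) (hgdiff : Differentiable ℝ g)
    (hφsc : ∀ y y' : EuclideanSpace ℝ (Fin q),
      φ y' ≥ φ y + ⟪gradient φ y, y' - y⟫ + γ / 2 * ‖y' - y‖ ^ 2)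
    (hgsc : ∀ x x' : EuclideanSpace ℝ (Fin d),
      g x' ≥ g x + ⟪gradient g x, x' - x⟫ + lam / 2 * ‖x' - x‖ ^ 2)
    (A : Matrix (Fin d) (Fin q) ℝ)
    (L : EuclideanSpace ℝ (Fin d) → EuclideanSpace ℝ (Fin q) → ℝ)
    (hL : ∀ x y, L x y = g x + ⟪x, (WithLp.toLp 2 (A.mulVec y) : EuclideanSpace ℝ (Fin d))⟫ - φ y)
    (xstar : EuclideanSpace ℝ (Fin d)) (ystar : EuclideanSpace ℝ (Fin q))
    (hsaddle : ∀ (x : EuclideanSpace ℝ (Fin d)) (y : EuclideanSpace ℝ (Fin q)),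
      L xstar y ≤ L xstar ystar ∧ L xstar ystar ≤ L x ystar)
    (xbar : EuclideanSpace ℝ (Fin d)) (yt : EuclideanSpace ℝ (Fin q))
    (σ : ℝ) (hσ : 0 < σ)
    (ytilde : EuclideanSpace ℝ (Fin q))
    (hmin : ∀ y : EuclideanSpace ℝ (Fin q),
      φ ytilde - ⟪xbar, (WithLp.toLp 2 (A.mulVec ytilde) : EuclideanSpace ℝ (Fin d))⟫
          + 1 / (2 * σ) * ‖ytilde - yt‖ ^ 2
        ≤ φ y - ⟪xbar, (WithLp.toLp 2 (A.mulVec y) : EuclideanSpace ℝ (Fin d))⟫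
          + 1 / (2 * σ) * ‖y - yt‖ ^ 2) :
    1 / (2 * σ) * ‖yt - ystar‖ ^ 2
      ≥ (1 / (2 * σ) + γ) * ‖ytilde - ystar‖ ^ 2
        + 1 / (2 * σ) * ‖ytilde - yt‖ ^ 2
        + ⟪xstar - xbar, (WithLp.toLp 2 (A.mulVec (ytilde - ystar)) : EuclideanSpace ℝ (Fin d))⟫ := by
  set c : ℝ := 1 / (2 * σ) with hc
  set vbar : EuclideanSpace ℝ (Fin q) := (WithLp.toLp 2 (Aᵀ.mulVec xbar) : EuclideanSpace ℝ (Fin q))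
    with hvbar
  set vstar : EuclideanSpace ℝ (Fin q) := (WithLp.toLp 2 (Aᵀ.mulVec xstar) : EuclideanSpace ℝ (Fin q))
    with hvstar
  -- critical point at ytilde
  have hmin' : ∀ y, φ ytilde - ⟪vbar, ytilde⟫ + c * ‖ytilde - yt‖ ^ 2
      ≤ φ y - ⟪vbar, y⟫ + c * ‖y - yt‖ ^ 2 := by
    intro y
    have h := hmin y
    rwa [adjoint_inner A xbar ytilde, adjoint_inner A xbar y] at h
  have e2 := crit hφdiff vbar yt ytilde c hmin' (ystar - ytilde)
  -- critical point at ystar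
  have hmin2 : ∀ y, φ ystar - ⟪vstar, ystar⟫ + (0:ℝ) * ‖ystar - yt‖ ^ 2
      ≤ φ y - ⟪vstar, y⟫ + (0:ℝ) * ‖y - yt‖ ^ 2 := by
    intro y
    have h1 := (hsaddle xstar y).1
    rw [hL xstar y, hL xstar ystar, adjoint_inner A xstar y, adjoint_inner A xstar ystar] at h1
    simp only [zero_mul, add_zero]
    linarith
  have e3 := crit hφdiff vstar yt ystar 0 hmin2 (ytilde - ystar)
  have i1 := hφsc ytilde ystar
  have i2 := hφsc ystar ytilde
  -- norm identity
  have e1 : ‖yt - ystar‖ ^ 2 =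
      ‖ytilde - yt‖ ^ 2 + ‖ytilde - ystar‖ ^ 2 + 2 * ⟪ytilde - yt, ystar - ytilde⟫ := by
    have h := norm_add_sq_real (yt - ytilde) (ytilde - ystar)
    have hx : yt - ytilde + (ytilde - ystar) = yt - ystar := by abel
    rw [hx] at h
    have h2 : ⟪yt - ytilde, ytilde - ystar⟫ = ⟪ytilde - yt, ystar - ytilde⟫ := by
      rw [show yt - ytilde = -(ytilde - yt) by abel,
        show ytilde - ystar = -(ystar - ytilde) by abel, inner_neg_neg]
    rw [h2, norm_sub_rev yt ytilde] at h
    linarith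
  -- inner product identities
  have e4 : ⟪xstar - xbar, (WithLp.toLp 2 (A.mulVec (ytilde - ystar)) : EuclideanSpace ℝ (Fin d))⟫
      = ⟪vstar, ytilde - ystar⟫ - ⟪vbar, ytilde - ystar⟫ := by
    rw [inner_sub_left, ← WithLp.ofLp_sub (x := ytilde) (y := ystar), adjoint_inner A xstar (ytilde - ystar),
      adjoint_inner A xbar (ytilde - ystar)]
  have e5 : ⟪vbar, ystar - ytilde⟫ = -⟪vbar, ytilde - ystar⟫ := by
    rw [show ystar - ytilde = -(ytilde - ystar) by abel, inner_neg_right]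
  have e7 : ‖ystar - ytilde‖ = ‖ytilde - ystar‖ := norm_sub_rev _ _
  rw [e7] at i1
  simp only [zero_mul, mul_zero, sub_zero] at e3
  -- combine
  have key : 2 * (c * ⟪ytilde - yt, ystar - ytilde⟫)
      ≥ γ * ‖ytilde - ystar‖ ^ 2
        + ⟪xstar - xbar, (WithLp.toLp 2 (A.mulVec (ytilde - ystar)) : EuclideanSpace ℝ (Fin d))⟫ := by
    rw [e4]
    nlinarith [i1, i2, e2, e3, e5]
  rw [e1]
  nlinarith [key]
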